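/- Let 𝒞 be a category, let 𝒳, 𝒴, 𝒵 be categories over 𝒞, and let g : 𝒳 → 𝒵 and h : 𝒴 → 𝒵 be 1-morphisms over 𝒞 with g strongly representable. Define a category 𝒲 whose objects are pairs (A, B) with A an object of 𝒳 and B an object of 𝒴 such that g(A) = h(B), and whose morphisms (a, b) : (A, B) → (A′, B′) are pairs of morphisms a : A → A′ in 𝒳 and b : B → B′ in 𝒴 with g(a) = h(b); let p_𝒲(A, B) = p_𝒴(B) on objects and p_𝒲(a, b) = p_𝒴(b) on morphisms, and let e : 𝒲 → 𝒳 and f : 𝒲 → 𝒴 be the projection functors. Then: (i) 𝒲 is a category over 𝒞 and e, f are 1-morphisms over 𝒞 satisfying g ∘ e = h ∘ f; (ii) f is strongly representable; (iii) if h is also strongly representable then e is strongly representable; and (iv) the square is 2-Cartesian: for every category 𝒯 over 𝒞, all 1-morphisms u : 𝒯 → 𝒳 and v : 𝒯 → 𝒴 over 𝒞, and every 2-morphism η : g ∘ u ⇒ h ∘ v over 𝒞, there exist a 1-morphism w : 𝒯 → 𝒲 over 𝒞 and 2-morphisms ζ : e ∘ w ⇒ u and θ : f ∘ w ⇒ v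 over 𝒞 such that h(θ_T) = η_T ∘ g(ζ_T) for every object T of 𝒯; and for any other such triple (w̃, ζ̃, θ̃) there is a unique natural isomorphism ε : w̃ ⇒ w with ζ̃_T = ζ_T ∘ e(ε_T) and θ̃_T = θ_T ∘ f(ε_T) for all objects T of 𝒯. -/

import Mathlib

open CategoryTheory

universe v₁ v₂ v₃ v₄ v₅ u₁ u₂ u₃ u₄ u₅

/-- A 1-morphism `g : 𝒴 → 𝒵` of categories over `𝒞` is *strongly representable* if whenever
`A` is an object of `𝒴` and `b : g(A) ≅ B'` is an isomorphism in `𝒵` projecting to an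
identity in `𝒞`, there exist a unique object `A'` of `𝒴` and a unique isomorphism
`a : A ≅ A'` with `g(A') = B'` and `g(a) = b`. -/
def StronglyRepresentable {Y : Type u₁} [Category.{v₁} Y] {Z : Type u₂} [Category.{v₂} Z]
    {C : Type u₃} [Category.{v₃} C] (pZ : Z ⥤ C) (g : Y ⥤ Z) : Prop :=
  ∀ (A : Y) (B' : Z) (b : g.obj A ≅ B'),
    (∃ e : pZ.obj (g.obj A) = pZ.obj B', pZ.map b.hom = eqToHom e) →
    ∃! p : (Σ' A' : Y, A ≅ A'),
      ∃ e' : g.obj p.1 = B', g.map p.2.hom ≫ eqToHom e' = b.hom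

section FiberProduct

variable {X : Type u₁} [Category.{v₁} X] {Y : Type u₂} [Category.{v₂} Y]
  {Z : Type u₃} [Category.{v₃} Z] {C : Type u₄} [Category.{v₄} C]

/-- Objects of the fibre product category `𝒲 = 𝒳 ×_𝒵 𝒴`: pairs `(A, B)` of objects with
`g(A) = h(B)`. -/
structure FiberObj (g : X ⥤ Z) (h : Y ⥤ Z) : Type (max u₁ u₂) where
  left : X
  right : Y
  w : g.obj left = h.obj right

/-- Morphisms `(a, b) : (A, B) → (A', B')` in the fibre product category: pairs of morphisms
with `g(a) = h(b)`. -/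
structure FiberHom {g : X ⥤ Z} {h : Y ⥤ Z} (P Q : FiberObj g h) : Type (max v₁ v₂) where
  fst : P.left ⟶ Q.left
  snd : P.right ⟶ Q.right
  w : g.map fst ≫ eqToHom Q.w = eqToHom P.w ≫ h.map snd

theorem FiberHom.ext' {g : X ⥤ Z} {h : Y ⥤ Z} {P Q : FiberObj g h}
    {u v : FiberHom P Q} (h1 : u.fst = v.fst) (h2 : u.snd = v.snd) : u = v := by
  cases u; cases v; cases h1; cases h2; rfl

instance fiberCategory (g : X ⥤ Z) (h : Y ⥤ Z) : Category (FiberObj g h) where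
  Hom := FiberHom
  id P := ⟨𝟙 P.left, 𝟙 P.right, by simp⟩
  comp := fun {P Q R} u v =>
    ⟨u.fst ≫ v.fst, u.snd ≫ v.snd, by
      rw [Functor.map_comp, Functor.map_comp, Category.assoc, v.w, ← Category.assoc, u.w,
        Category.assoc]⟩
  id_comp := fun {P Q} u => FiberHom.ext' (Category.id_comp u.fst) (Category.id_comp u.snd)
  comp_id := fun {P Q} u => FiberHom.ext' (Category.comp_id u.fst) (Category.comp_id u.snd)
  assoc := fun {P Q R S} u v w =>
    FiberHom.ext' (Category.assoc u.fst v.fst w.fst) (Category.assoc u.snd v.snd w.snd)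

/-- The projection 1-morphism `e : 𝒲 → 𝒳`. -/
def fiberFst (g : X ⥤ Z) (h : Y ⥤ Z) : FiberObj g h ⥤ X where
  obj P := P.left
  map u := u.fst
  map_id _ := rfl
  map_comp _ _ := rfl

/-- The projection 1-morphism `f : 𝒲 → 𝒴`. -/
def fiberSnd (g : X ⥤ Z) (h : Y ⥤ Z) : FiberObj g h ⥤ Y where
  obj P := P.right
  map u := u.snd
  map_id _ := rfl
  map_comp _ _ := rfl

/-- The projection functor `p_𝒲 : 𝒲 → 𝒞`, `(A, B) ↦ p_𝒴(B)`, making `𝒲` a category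
over `𝒞`. -/
def fiberProj (g : X ⥤ Z) (h : Y ⥤ Z) (pY : Y ⥤ C) : FiberObj g h ⥤ C :=
  fiberSnd g h ⋙ pY


@[simp] theorem fiber_id_fst {g : X ⥤ Z} {h : Y ⥤ Z} (P : FiberObj g h) :
    (𝟙 P : FiberHom P P).fst = 𝟙 P.left := rfl

@[simp] theorem fiber_id_snd {g : X ⥤ Z} {h : Y ⥤ Z} (P : FiberObj g h) :
    (𝟙 P : FiberHom P P).snd = 𝟙 P.right := rfl

@[simp] theorem fiber_comp_fst {g : X ⥤ Z} {h : Y ⥤ Z} {P Q R : FiberObj g h}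
    (u : P ⟶ Q) (v : Q ⟶ R) : (u ≫ v).fst = u.fst ≫ v.fst := rfl

@[simp] theorem fiber_comp_snd {g : X ⥤ Z} {h : Y ⥤ Z} {P Q R : FiberObj g h}
    (u : P ⟶ Q) (v : Q ⟶ R) : (u ≫ v).snd = u.snd ≫ v.snd := rfl

/-- Equality of fibre-product objects from equality of components. -/
theorem FiberObj.ext'' {g : X ⥤ Z} {h : Y ⥤ Z} {P Q : FiberObj g h}
    (h1 : P.left = Q.left) (h2 : P.right = Q.right) : P = Q := by
  cases P; cases Q; cases h1; cases h2; rfl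

/-- Build an isomorphism in the fibre product from componentwise isomorphisms. -/
def fiberMkIso {g : X ⥤ Z} {h : Y ⥤ Z} {P Q : FiberObj g h}
    (a : P.left ≅ Q.left) (b : P.right ≅ Q.right)
    (w : g.map a.hom ≫ eqToHom Q.w = eqToHom P.w ≫ h.map b.hom) : P ≅ Q where
  hom := ⟨a.hom, b.hom, w⟩
  inv := ⟨a.inv, b.inv, by
    calc g.map a.inv ≫ eqToHom P.w
        = g.map a.inv ≫ (eqToHom P.w ≫ h.map b.hom) ≫ h.map b.inv := by
          simp [← Functor.map_comp]
      _ = g.map a.inv ≫ (g.map a.hom ≫ eqToHom Q.w) ≫ h.map b.inv := by rw [w]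
      _ = eqToHom Q.w ≫ h.map b.inv := by
          rw [Category.assoc, ← Category.assoc (g.map a.inv), ← Functor.map_comp,
            Iso.inv_hom_id]
          simp⟩
  hom_inv_id := FiberHom.ext' a.hom_inv_id b.hom_inv_id
  inv_hom_id := FiberHom.ext' a.inv_hom_id b.inv_hom_id

/-- First component of an isomorphism in the fibre product. -/
def fiberIsoFst {g : X ⥤ Z} {h : Y ⥤ Z} {P Q : FiberObj g h} (i : P ≅ Q) :
    P.left ≅ Q.left where
  hom := i.hom.fst
  inv := i.inv.fst
  hom_inv_id := congrArg FiberHom.fst i.hom_inv_id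
  inv_hom_id := congrArg FiberHom.fst i.inv_hom_id

/-- Second component of an isomorphism in the fibre product. -/
def fiberIsoSnd {g : X ⥤ Z} {h : Y ⥤ Z} {P Q : FiberObj g h} (i : P ≅ Q) :
    P.right ≅ Q.right where
  hom := i.hom.snd
  inv := i.inv.snd
  hom_inv_id := congrArg FiberHom.snd i.hom_inv_id
  inv_hom_id := congrArg FiberHom.snd i.inv_hom_id

/-- The explicit construction of the fibre product `𝒲 = 𝒳 ×_𝒵 𝒴` of categories over `𝒞`
along a strongly representable 1-morphism `g`: (i) the projections `e : 𝒲 → 𝒳` and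
`f : 𝒲 → 𝒴` are 1-morphisms over `𝒞` with `g ∘ e = h ∘ f`; (ii) `f` is strongly
representable; (iii) if `h` is strongly representable then so is `e`; (iv) the square is
2-Cartesian: for every category `𝒯` over `𝒞`, 1-morphisms `u : 𝒯 → 𝒳`, `v : 𝒯 → 𝒴` over
`𝒞` and 2-morphism `η : g ∘ u ⇒ h ∘ v` over `𝒞`, there are a 1-morphism `w : 𝒯 → 𝒲` over
`𝒞` and 2-morphisms `ζ : e ∘ w ⇒ u`, `θ : f ∘ w ⇒ v` over `𝒞` with
`h(θ_T) = η_T ∘ g(ζ_T)` for all `T`, and for any other such triple `(w', ζ', θ')` there is a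
unique natural isomorphism `ε : w' ⇒ w` with `ζ'_T = ζ_T ∘ e(ε_T)` and
`θ'_T = θ_T ∘ f(ε_T)` for all `T`. -/
theorem fiberProduct_of_stronglyRepresentable
    (pX : X ⥤ C) (pY : Y ⥤ C) (pZ : Z ⥤ C) (g : X ⥤ Z) (h : Y ⥤ Z)
    (hg : g ⋙ pZ = pX) (hh : h ⋙ pZ = pY)
    (hrep : StronglyRepresentable pZ g) :
    (fiberFst g h ⋙ pX = fiberProj g h pY) ∧
    (fiberSnd g h ⋙ pY = fiberProj g h pY) ∧
    (fiberFst g h ⋙ g = fiberSnd g h ⋙ h) ∧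
    StronglyRepresentable pY (fiberSnd g h) ∧
    (StronglyRepresentable pZ h → StronglyRepresentable pX (fiberFst g h)) ∧
    (∀ (T : Type u₅) [Category.{v₅} T], ∀ (pT : T ⥤ C) (u : T ⥤ X) (v : T ⥤ Y),
      u ⋙ pX = pT → v ⋙ pY = pT →
      ∀ η : u ⋙ g ≅ v ⋙ h,
        (∀ t : T, ∃ e : pZ.obj (g.obj (u.obj t)) = pZ.obj (h.obj (v.obj t)),
          pZ.map (η.hom.app t) = eqToHom e) →
        ∃ (w : T ⥤ FiberObj g h) (_ : w ⋙ fiberProj g h pY = pT)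
          (ζ : w ⋙ fiberFst g h ≅ u) (θ : w ⋙ fiberSnd g h ≅ v),
          (∀ t : T, ∃ e : pX.obj ((w.obj t).left) = pX.obj (u.obj t),
            pX.map (ζ.hom.app t) = eqToHom e) ∧
          (∀ t : T, ∃ e : pY.obj ((w.obj t).right) = pY.obj (v.obj t),
            pY.map (θ.hom.app t) = eqToHom e) ∧
          (∀ t : T, g.map (ζ.hom.app t) ≫ η.hom.app t
            = eqToHom (w.obj t).w ≫ h.map (θ.hom.app t)) ∧
          (∀ (w' : T ⥤ FiberObj g h), w' ⋙ fiberProj g h pY = pT →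
            ∀ (ζ' : w' ⋙ fiberFst g h ≅ u) (θ' : w' ⋙ fiberSnd g h ≅ v),
              (∀ t : T, ∃ e : pX.obj ((w'.obj t).left) = pX.obj (u.obj t),
                pX.map (ζ'.hom.app t) = eqToHom e) →
              (∀ t : T, ∃ e : pY.obj ((w'.obj t).right) = pY.obj (v.obj t),
                pY.map (θ'.hom.app t) = eqToHom e) →
              (∀ t : T, g.map (ζ'.hom.app t) ≫ η.hom.app t
                = eqToHom (w'.obj t).w ≫ h.map (θ'.hom.app t)) →
              ∃! ε : w' ≅ w,
                ∀ t : T,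
                  ζ'.hom.app t = (fiberFst g h).map (ε.hom.app t) ≫ ζ.hom.app t ∧
                  θ'.hom.app t = (fiberSnd g h).map (ε.hom.app t) ≫ θ.hom.app t)) := by
  subst hg; subst hh
  refine ⟨?_, rfl, ?_, ?_, ?_, ?_⟩
  · -- (i): the outer square over C commutes
    have hobj : ∀ P : FiberObj g h,
        (fiberFst g h ⋙ g ⋙ pZ).obj P = (fiberProj g h (h ⋙ pZ)).obj P :=
      fun P => congrArg pZ.obj P.w
    refine CategoryTheory.Functor.ext hobj (fun P Q k => ?_)
    have hk := congrArg pZ.map k.w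
    rw [pZ.map_comp, pZ.map_comp, eqToHom_map, eqToHom_map] at hk
    show pZ.map (g.map k.fst)
      = eqToHom (hobj P) ≫ pZ.map (h.map k.snd) ≫ eqToHom (hobj Q).symm
    erw [← Category.assoc, ← hk]
    erw [Category.assoc, eqToHom_trans, eqToHom_refl, Category.comp_id]
  · -- (i): g ∘ e = h ∘ f
    have hobj : ∀ P : FiberObj g h,
        (fiberFst g h ⋙ g).obj P = (fiberSnd g h ⋙ h).obj P := fun P => P.w
    refine CategoryTheory.Functor.ext hobj (fun P Q k => ?_)
    show g.map k.fst = eqToHom P.w ≫ h.map k.snd ≫ eqToHom Q.w.symm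
    rw [← Category.assoc, ← k.w]
    simp
  · -- (ii): f is strongly representable
    intro P B' (b : P.right ≅ B') hb
    obtain ⟨eb, heb⟩ := hb
    have hcond : ∃ e : pZ.obj (g.obj P.left) = pZ.obj (h.obj B'),
        pZ.map ((eqToIso P.w ≪≫ h.mapIso b).hom) = eqToHom e := by
      refine ⟨(congrArg pZ.obj P.w).trans eb, ?_⟩
      show pZ.map (eqToHom P.w ≫ h.map b.hom) = _
      rw [pZ.map_comp, eqToHom_map]
      exact (heb ▸ eqToHom_trans _ _)
    obtain ⟨⟨A', a⟩, ⟨e', ha⟩, huniq⟩ := hrep P.left (h.obj B') (eqToIso P.w ≪≫ h.mapIso b) hcond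
    simp only [Iso.trans_hom, eqToIso.hom, Functor.mapIso_hom] at ha
    refine ⟨⟨⟨A', B', e'⟩, fiberMkIso a b ha⟩, ⟨rfl, ?_⟩, ?_⟩
    · simp [fiberSnd, fiberMkIso]
    · rintro ⟨Q₂, i₂⟩ ⟨e₂, hq⟩
      replace e₂ : Q₂.right = B' := e₂
      replace hq : i₂.hom.snd ≫ eqToHom e₂ = b.hom := hq
      have e₂' : g.obj Q₂.left = h.obj B' := Q₂.w.trans (congrArg h.obj e₂)
      have hps : (⟨Q₂.left, fiberIsoFst i₂⟩ : Σ' A'' : X, P.left ≅ A'') = ⟨A', a⟩ := by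
        refine huniq _ ⟨e₂', ?_⟩
        have := i₂.hom.w
        show g.map i₂.hom.fst ≫ eqToHom e₂' = eqToHom P.w ≫ h.map b.hom
        calc g.map i₂.hom.fst ≫ eqToHom e₂'
            = (g.map i₂.hom.fst ≫ eqToHom Q₂.w) ≫ eqToHom (congrArg h.obj e₂) := by
              simp
          _ = eqToHom P.w ≫ h.map i₂.hom.snd ≫ eqToHom (congrArg h.obj e₂) := by
              rw [i₂.hom.w]; simp
          _ = eqToHom P.w ≫ h.map b.hom := by
              rw [← eqToHom_map h e₂, ← Functor.map_comp, hq]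
      have hQ : Q₂ = (⟨A', B', e'⟩ : FiberObj g h) := by
        refine FiberObj.ext'' ?_ e₂
        exact congrArg PSigma.fst hps
      subst hQ
      injection hps with h1 h2
      have hfst : i₂.hom.fst = a.hom := congrArg Iso.hom h2
      have hsnd : i₂.hom.snd = b.hom := by
        simpa using hq
      congr 1
      refine Iso.ext (FiberHom.ext' hfst hsnd)
  · -- (iii): if h is strongly representable then e is strongly representable
    intro hreph P A' (a : P.left ≅ A') ha
    obtain ⟨ea, hea⟩ := ha
    have hcond : ∃ e : pZ.obj (h.obj P.right) = pZ.obj (g.obj A'),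
        pZ.map ((eqToIso P.w.symm ≪≫ g.mapIso a).hom) = eqToHom e := by
      refine ⟨(congrArg pZ.obj P.w.symm).trans ea, ?_⟩
      show pZ.map (eqToHom P.w.symm ≫ g.map a.hom) = _
      rw [pZ.map_comp, eqToHom_map]
      exact (hea ▸ eqToHom_trans _ _)
    obtain ⟨⟨B', b⟩, ⟨e', hbb⟩, huniq⟩ :=
      hreph P.right (g.obj A') (eqToIso P.w.symm ≪≫ g.mapIso a) hcond
    simp only [Iso.trans_hom, eqToIso.hom, Functor.mapIso_hom] at hbb
    have hg2 : g.map a.hom = eqToHom P.w ≫ h.map b.hom ≫ eqToHom e' := by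
      rw [hbb]; simp
    have hw : g.map a.hom ≫ eqToHom e'.symm = eqToHom P.w ≫ h.map b.hom := by
      rw [hg2]; simp
    refine ⟨⟨⟨A', B', e'.symm⟩, fiberMkIso a b hw⟩, ⟨rfl, ?_⟩, ?_⟩
    · simp [fiberFst, fiberMkIso]
    · rintro ⟨Q₂, i₂⟩ ⟨e₂, hq⟩
      replace e₂ : Q₂.left = A' := e₂
      replace hq : i₂.hom.fst ≫ eqToHom e₂ = a.hom := hq
      have e₂' : h.obj Q₂.right = g.obj A' := Q₂.w.symm.trans (congrArg g.obj e₂)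
      have hps : (⟨Q₂.right, fiberIsoSnd i₂⟩ : Σ' B'' : Y, P.right ≅ B'') = ⟨B', b⟩ := by
        refine huniq _ ⟨e₂', ?_⟩
        show h.map i₂.hom.snd ≫ eqToHom e₂' = eqToHom P.w.symm ≫ g.map a.hom
        calc h.map i₂.hom.snd ≫ eqToHom e₂'
            = (eqToHom P.w.symm ≫ (eqToHom P.w ≫ h.map i₂.hom.snd) ≫ eqToHom Q₂.w.symm)
                ≫ eqToHom (congrArg g.obj e₂) := by simp
          _ = (eqToHom P.w.symm ≫ (g.map i₂.hom.fst ≫ eqToHom Q₂.w) ≫ eqToHom Q₂.w.symm)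
                ≫ eqToHom (congrArg g.obj e₂) := by rw [i₂.hom.w]
          _ = eqToHom P.w.symm ≫ g.map i₂.hom.fst ≫ eqToHom (congrArg g.obj e₂) := by simp
          _ = eqToHom P.w.symm ≫ g.map a.hom := by
              rw [← eqToHom_map g e₂, ← Functor.map_comp, hq]
      have hQ : Q₂ = (⟨A', B', e'.symm⟩ : FiberObj g h) := by
        refine FiberObj.ext'' e₂ ?_
        exact congrArg PSigma.fst hps
      subst hQ
      injection hps with h1 h2
      have hsnd : i₂.hom.snd = b.hom := congrArg Iso.hom h2
      have hfst : i₂.hom.fst = a.hom := by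
        simpa using hq
      congr 1
      refine Iso.ext (FiberHom.ext' hfst hsnd)
  · -- (iv): the square is 2-Cartesian
    intro T _ pT u v hu hv η hη
    have H : ∀ t : T, ∃! p : (Σ' A' : X, u.obj t ≅ A'),
        ∃ e' : g.obj p.1 = h.obj (v.obj t), g.map p.2.hom ≫ eqToHom e' = η.hom.app t :=
      fun t => hrep (u.obj t) (h.obj (v.obj t)) (η.app t) (hη t)
    choose p hp hup using H
    choose pe phom using hp
    set A : T → X := fun t => (p t).1 with hA
    set a : ∀ t : T, u.obj t ≅ A t := fun t => (p t).2 with ha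
    have key : ∀ t : T, g.map (a t).inv ≫ η.hom.app t = eqToHom (pe t) := by
      intro t
      rw [← phom t, ← Category.assoc, ← Functor.map_comp, Iso.inv_hom_id]
      simp
    have wcond : ∀ {t t' : T} (k : t ⟶ t'),
        g.map ((a t).inv ≫ u.map k ≫ (a t').hom) ≫ eqToHom (pe t')
          = eqToHom (pe t) ≫ h.map (v.map k) := by
      intro t t' k
      rw [Functor.map_comp, Functor.map_comp, Category.assoc, Category.assoc, phom t']
      have := η.hom.naturality k
      simp only [Functor.comp_map] at this
      rw [this, ← Category.assoc, key t]
    refine ⟨{ obj := fun t => ⟨A t, v.obj t, pe t⟩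
              map := fun {t t'} k => ⟨(a t).inv ≫ u.map k ≫ (a t').hom, v.map k, wcond k⟩
              map_id := fun t => FiberHom.ext' (by simp) (by simp)
              map_comp := fun k l => FiberHom.ext' (by simp) (by simp) }, ?_, ?_⟩
    · exact hv
    refine ⟨NatIso.ofComponents (fun t => (a t).symm) (fun {t t'} k => ?_),
        NatIso.ofComponents (fun t => Iso.refl (v.obj t)) (fun {t t'} k => by
          show v.map k ≫ 𝟙 _ = 𝟙 _ ≫ v.map k
          simp), ?_, ?_, ?_, ?_⟩
    · show ((a t).inv ≫ u.map k ≫ (a t').hom) ≫ (a t').inv = (a t).inv ≫ u.map k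
      simp
    · -- pX condition for ζ
      intro t
      obtain ⟨e1, he1⟩ := hη t
      refine ⟨(congrArg pZ.obj (pe t)).trans e1.symm, ?_⟩
      show pZ.map (g.map (a t).inv) = _
      have hk := congrArg pZ.map (key t)
      rw [pZ.map_comp, he1, eqToHom_map] at hk
      have : pZ.map (g.map (a t).inv)
          = eqToHom (congrArg pZ.obj (pe t)) ≫ eqToHom e1.symm := by
        rw [← hk]; simp
      rw [this, eqToHom_trans]
    · -- pY condition for θ
      intro t
      refine ⟨rfl, ?_⟩
      show pZ.map (h.map (𝟙 (v.obj t))) = eqToHom rfl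
      rw [h.map_id, pZ.map_id, eqToHom_refl]
    · -- compatibility with η
      intro t
      show g.map (a t).inv ≫ η.hom.app t = eqToHom (pe t) ≫ h.map (𝟙 (v.obj t))
      rw [key t]; simp
    · -- uniqueness of (w, ζ, θ)
      intro w' hw' ζ' θ' hζX hθY hcomp'
      have wcond' : ∀ t : T,
          g.map (ζ'.hom.app t ≫ (a t).hom) ≫ eqToHom (pe t)
            = eqToHom (w'.obj t).w ≫ h.map (θ'.hom.app t) := by
        intro t
        rw [Functor.map_comp, Category.assoc, phom t, hcomp' t]
      refine ⟨NatIso.ofComponents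
          (fun t => fiberMkIso (ζ'.app t ≪≫ a t) (θ'.app t)
            (by exact wcond' t)) (fun {t t'} k => ?_), fun t => ⟨?_, ?_⟩, ?_⟩
      · refine FiberHom.ext' ?_ ?_
        · show (w'.map k).fst ≫ ζ'.hom.app t' ≫ (a t').hom
            = (ζ'.hom.app t ≫ (a t).hom) ≫ (a t).inv ≫ u.map k ≫ (a t').hom
          have := ζ'.hom.naturality k
          simp only [Functor.comp_map, fiberFst] at this
          erw [← Category.assoc, this]
          simp
          rfl
        · show (w'.map k).snd ≫ θ'.hom.app t' = θ'.hom.app t ≫ v.map k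
          have := θ'.hom.naturality k
          simpa [fiberSnd] using this
      · show ζ'.hom.app t = (ζ'.hom.app t ≫ (a t).hom) ≫ (a t).inv; simp
      · show θ'.hom.app t = θ'.hom.app t ≫ 𝟙 _; simp
      · intro ε₂ hε₂
        refine Iso.ext ?_
        ext t
        refine FiberHom.ext' ?_ ?_
        · have h1 := (hε₂ t).1
          simp only [NatIso.ofComponents_hom_app, fiberMkIso, Iso.trans_hom, Iso.app_hom]
          show (ε₂.hom.app t).fst = ζ'.hom.app t ≫ (a t).hom
          change ζ'.hom.app t = (ε₂.hom.app t).fst ≫ (a t).inv at h1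
          rw [h1]
          erw [Category.assoc, Iso.inv_hom_id, Category.comp_id]
        · have h2 := (hε₂ t).2
          simp only [NatIso.ofComponents_hom_app, fiberMkIso, Iso.trans_hom, Iso.app_hom]
          rw [h2]
          exact (Category.comp_id _).symm

end FiberProduct
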